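/- Let T_m, T_θ, K > 0 be constants, let ω_g : ℝ → ℝ be a continuous input, and let P_m, θ : ℝ → ℝ be differentiable functions satisfying for all t: T_m Ṗ_m(t) = −P_m(t) − K⁻¹ω_g(t) + θ(t) and T_θ θ̇(t) = −θ(t) + P_m(t). Let P̄_m = θ̄ ∈ ℝ be constants (the steady state with zero frequency deviation). Define Z₁(θ, P_m) = (T_θ K/2)(θ − θ̄)² + (T_m K/2)(P_m − P̄_m)². Then for all t, d/dt Z₁(θ(t), P_m(t)) = −K(θ(t) − P_m(t))² − ω_g(t)(P_m(t) − P̄_m). -/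

import Mathlib

/-- Incremental passivity of the first-order turbine-governor with the proposed
controller: `Ż₁ = −K(θ − P_m)² − ω_g(P_m − P̄_m)`. -/
theorem first_order_turbine_passivity (Tm Tθ K : ℝ)
    (hTm : 0 < Tm) (hTθ : 0 < Tθ) (hK : 0 < K)
    (ωg Pm θ : ℝ → ℝ) (hωg : Continuous ωg)
    -- T_m Ṗ_m = −P_m − K⁻¹ ω_g + θ :
    (hPm : ∀ t, HasDerivAt Pm ((-Pm t - K⁻¹ * ωg t + θ t) / Tm) t)
    -- T_θ θ̇ = −θ + P_m :
    (hθ : ∀ t, HasDerivAt θ ((-θ t + Pm t) / Tθ) t)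
    (Pmb θb : ℝ) (hs : Pmb = θb) :
    ∀ t, HasDerivAt
      (fun s => Tθ * K / 2 * (θ s - θb)^2 + Tm * K / 2 * (Pm s - Pmb)^2)
      (-(K * (θ t - Pm t)^2) - ωg t * (Pm t - Pmb)) t := by
  intro t
  have h1 := (((hθ t).sub_const θb).pow 2).const_mul (Tθ * K / 2)
  have h2 := (((hPm t).sub_const Pmb).pow 2).const_mul (Tm * K / 2)
  have h := h1.add h2
  convert h using 1
  · rfl
  · rfl
  · rfl
  subst hs
  field_simp
  ring
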